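/- If N is a symmetric complex m×m matrix with Im N negative definite, and S = [[A,B],[C,D]] ∈ Sp(2m,ℝ), then A + BN is invertible, and Ñ = (C + DN)(A + BN)^{-1} is again symmetric with negative definite imaginary part. -/

import Mathlib

open Matrix Complex

namespace Stmt6Aux

variable {m : ℕ}

theorem cmul (X Y : Matrix (Fin m) (Fin m) ℝ) :
    (X*Y).map Complex.ofReal = X.map Complex.ofReal * Y.map Complex.ofReal := by
  ext i j; simp [Matrix.mul_apply]

theorem cone : (1 : Matrix (Fin m) (Fin m) ℝ).map Complex.ofReal = 1 := by
  ext i j; simp [Matrix.one_apply, apply_ite]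

theorem csub (X Y : Matrix (Fin m) (Fin m) ℝ) :
    (X - Y).map Complex.ofReal = X.map Complex.ofReal - Y.map Complex.ofReal := by
  ext i j; simp

theorem cherm (X : Matrix (Fin m) (Fin m) ℝ) :
    (X.map Complex.ofReal)ᴴ = Xᵀ.map Complex.ofReal := by
  ext i j; simp [conjTranspose_apply, Complex.conj_ofReal]

theorem quadRe (M : Matrix (Fin m) (Fin m) ℝ) (y : Fin m → ℂ) :
    (star y ⬝ᵥ ((M.map Complex.ofReal) *ᵥ y)).re
      = (fun i => (y i).re) ⬝ᵥ (M *ᵥ fun i => (y i).re)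
        + (fun i => (y i).im) ⬝ᵥ (M *ᵥ fun i => (y i).im) := by
  simp only [dotProduct, mulVec, Matrix.map_apply, Pi.star_apply, Finset.mul_sum,
    Complex.re_sum]
  rw [← Finset.sum_add_distrib]
  refine Finset.sum_congr rfl fun i _ => ?_
  rw [← Finset.sum_add_distrib]
  refine Finset.sum_congr rfl fun j _ => ?_
  simp [Complex.mul_re, Complex.mul_im]

theorem quadIm (M : Matrix (Fin m) (Fin m) ℂ) (x : Fin m → ℝ) :
    x ⬝ᵥ ((M.map Complex.im) *ᵥ x)
      = ((fun i => (x i : ℂ)) ⬝ᵥ (M *ᵥ fun i => (x i : ℂ))).im := by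
  simp only [dotProduct, mulVec, Matrix.map_apply, Complex.im_sum, Finset.mul_sum]
  refine Finset.sum_congr rfl fun i _ => ?_
  refine Finset.sum_congr rfl fun j _ => ?_
  simp [Complex.mul_im]

theorem conj_quad (M : Matrix (Fin m) (Fin m) ℂ) (y : Fin m → ℂ) :
    star (star y ⬝ᵥ (M *ᵥ y)) = star y ⬝ᵥ (Mᴴ *ᵥ y) := by
  rw [star_dotProduct, star_star, star_mulVec, dotProduct_mulVec]

theorem adj_dot (M : Matrix (Fin m) (Fin m) ℂ) (y z : Fin m → ℂ) :
    star (M *ᵥ y) ⬝ᵥ z = star y ⬝ᵥ (Mᴴ *ᵥ z) := by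
  rw [star_mulVec, dotProduct_mulVec]

theorem keyId (Ac Bc Cc Dc N : Matrix (Fin m) (Fin m) ℂ)
    (e1 : Acᵀ * Cc = Ccᵀ * Ac) (e2 : Bcᵀ * Dc = Dcᵀ * Bc)
    (e3 : Acᵀ * Dc - Ccᵀ * Bc = 1) (e3' : Dcᵀ * Ac - Bcᵀ * Cc = 1) :
    (Ccᵀ + Nᴴ * Dcᵀ) * (Ac + Bc * N) - (Acᵀ + Nᴴ * Bcᵀ) * (Cc + Dc * N) = Nᴴ - N := by
  linear_combination (norm := noncomm_ring) (-e1) + Nᴴ * e3' - e3 * N - Nᴴ * e2 * N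

theorem keyIdT (Ac Bc Cc Dc N : Matrix (Fin m) (Fin m) ℂ)
    (e1 : Acᵀ * Cc = Ccᵀ * Ac) (e2 : Bcᵀ * Dc = Dcᵀ * Bc)
    (e3 : Acᵀ * Dc - Ccᵀ * Bc = 1) (e3' : Dcᵀ * Ac - Bcᵀ * Cc = 1) :
    (Ccᵀ + N * Dcᵀ) * (Ac + Bc * N) = (Acᵀ + N * Bcᵀ) * (Cc + Dc * N) := by
  linear_combination (norm := noncomm_ring) (-e1) + N * e3' - e3 * N - N * e2 * N

end Stmt6Aux

open Stmt6Aux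

/-- If `N` is symmetric with negative definite imaginary part and `S = [[A,B],[C,D]]` is
real symplectic, then `A + BN` is invertible and `Ñ = (C+DN)(A+BN)⁻¹` is again symmetric
with negative definite imaginary part. -/
theorem stmt6 {m : ℕ} (N : Matrix (Fin m) (Fin m) ℂ) (hsym : Nᵀ = N)
    (hneg : ∀ x : Fin m → ℝ, x ≠ 0 → x ⬝ᵥ ((N.map Complex.im) *ᵥ x) < 0)
    (A B C D : Matrix (Fin m) (Fin m) ℝ)
    (h1 : Aᵀ * C = Cᵀ * A) (h2 : Bᵀ * D = Dᵀ * B) (h3 : Aᵀ * D - Cᵀ * B = 1) :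
    IsUnit (A.map Complex.ofReal + B.map Complex.ofReal * N).det ∧
    ((C.map Complex.ofReal + D.map Complex.ofReal * N) *
        (A.map Complex.ofReal + B.map Complex.ofReal * N)⁻¹)ᵀ
      = (C.map Complex.ofReal + D.map Complex.ofReal * N) *
        (A.map Complex.ofReal + B.map Complex.ofReal * N)⁻¹ ∧
    ∀ x : Fin m → ℝ, x ≠ 0 →
      x ⬝ᵥ ((((C.map Complex.ofReal + D.map Complex.ofReal * N) *
        (A.map Complex.ofReal + B.map Complex.ofReal * N)⁻¹).map Complex.im) *ᵥ x) < 0 := by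
  set Ac := A.map Complex.ofReal with hAcd
  set Bc := B.map Complex.ofReal with hBcd
  set Cc := C.map Complex.ofReal with hCcd
  set Dc := D.map Complex.ofReal with hDcd
  set P := Ac + Bc * N with hPd
  set Q := Cc + Dc * N with hQd
  -- transported symplectic relations
  have h3' : Dᵀ * A - Bᵀ * C = 1 := by
    have := congrArg Matrix.transpose h3
    simpa [Matrix.transpose_sub, Matrix.transpose_mul] using this
  have e1 : Acᵀ * Cc = Ccᵀ * Ac := by
    have := congrArg (fun X => X.map Complex.ofReal) h1
    simpa [cmul, hAcd, hBcd, hCcd, hDcd, Matrix.transpose_map] using this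
  have e2 : Bcᵀ * Dc = Dcᵀ * Bc := by
    have := congrArg (fun X => X.map Complex.ofReal) h2
    simpa [cmul, hAcd, hBcd, hCcd, hDcd, Matrix.transpose_map] using this
  have e3 : Acᵀ * Dc - Ccᵀ * Bc = 1 := by
    have := congrArg (fun X => X.map Complex.ofReal) h3
    simpa [cmul, csub, cone, hAcd, hBcd, hCcd, hDcd, Matrix.transpose_map] using this
  have e3' : Dcᵀ * Ac - Bcᵀ * Cc = 1 := by
    have := congrArg (fun X => X.map Complex.ofReal) h3'
    simpa [cmul, csub, cone, hAcd, hBcd, hCcd, hDcd, Matrix.transpose_map] using this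
  -- conjugate transposes
  have hPH : Pᴴ = Acᵀ + Nᴴ * Bcᵀ := by
    rw [hPd, conjTranspose_add, conjTranspose_mul, cherm, cherm]
    rfl
  have hQH : Qᴴ = Ccᵀ + Nᴴ * Dcᵀ := by
    rw [hQd, conjTranspose_add, conjTranspose_mul, cherm, cherm]
    rfl
  have hPT : Pᵀ = Acᵀ + N * Bcᵀ := by
    rw [hPd, transpose_add, transpose_mul, hsym]
  have hQT : Qᵀ = Ccᵀ + N * Dcᵀ := by
    rw [hQd, transpose_add, transpose_mul, hsym]
  -- the two key identities
  have key : Qᴴ * P - Pᴴ * Q = Nᴴ - N := by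
    rw [hPH, hQH, hPd, hQd]
    exact keyId Ac Bc Cc Dc N e1 e2 e3 e3'
  have keyT : Qᵀ * P = Pᵀ * Q := by
    rw [hPT, hQT, hPd, hQd]
    exact keyIdT Ac Bc Cc Dc N e1 e2 e3 e3'
  -- Nᴴ - N in terms of the imaginary part
  set M : Matrix (Fin m) (Fin m) ℝ := N.map im with hMd
  have hNN : Nᴴ - N = (-2 * Complex.I) • (M.map Complex.ofReal) := by
    ext i j
    have hS : N j i = N i j := (congrFun (congrFun hsym j) i).symm
    simp only [Matrix.sub_apply, conjTranspose_apply, Matrix.smul_apply, Matrix.map_apply,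
      hMd, hS, smul_eq_mul]
    apply Complex.ext <;> simp <;> ring
  -- negativity of the quadratic form on nonzero complex vectors
  have negQuad : ∀ y : Fin m → ℂ, y ≠ 0 →
      (star y ⬝ᵥ ((M.map Complex.ofReal) *ᵥ y)).re < 0 := by
    intro y hy
    rw [quadRe]
    have hle : ∀ x : Fin m → ℝ, x ⬝ᵥ (M *ᵥ x) ≤ 0 := by
      intro x
      by_cases hx : x = 0
      · simp [hx]
      · exact (hneg x hx).le
    have : (fun i => (y i).re) ≠ 0 ∨ (fun i => (y i).im) ≠ 0 := by
      by_contra h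
      push_neg at h
      apply hy
      funext i
      have h1 := congrFun h.1 i
      have h2 := congrFun h.2 i
      exact Complex.ext h1 h2
    rcases this with h | h
    · have := hneg _ h
      have := hle (fun i => (y i).im)
      linarith
    · have := hneg _ h
      have := hle (fun i => (y i).re)
      linarith
  -- invertibility
  have hdet : P.det ≠ 0 := by
    intro hd
    obtain ⟨v, hv0, hPv⟩ := Matrix.exists_mulVec_eq_zero_iff.2 hd
    have hz : star v ⬝ᵥ ((Nᴴ - N) *ᵥ v) = 0 := by
      rw [← key, sub_mulVec, dotProduct_sub, ← mulVec_mulVec, ← mulVec_mulVec, hPv,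
        mulVec_zero, dotProduct_zero, zero_sub, neg_eq_zero, dotProduct_mulVec,
        ← star_mulVec, hPv]
      simp
    rw [hNN, smul_mulVec, dotProduct_smul, smul_eq_mul, mul_eq_zero] at hz
    rcases hz with hz | hz
    · simp [Complex.ext_iff] at hz
    · have := negQuad v hv0
      rw [hz] at this
      simp at this
  have hP : IsUnit P.det := isUnit_iff_ne_zero.2 hdet
  have hPT' : IsUnit Pᵀ.det := by rwa [Matrix.det_transpose]
  refine ⟨hP, ?_, ?_⟩
  · -- symmetry
    have hQ' : Qᵀ = Pᵀ * Q * P⁻¹ := by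
      rw [← keyT, Matrix.mul_assoc, Matrix.mul_nonsing_inv _ hP, Matrix.mul_one]
    rw [transpose_mul, Matrix.transpose_nonsing_inv, hQ', ← Matrix.mul_assoc,
      ← Matrix.mul_assoc, Matrix.nonsing_inv_mul _ hPT', Matrix.one_mul]
  · -- negative definiteness of the imaginary part
    intro x hx
    set xc : Fin m → ℂ := fun i => (x i : ℂ) with hxcd
    have hxc : xc ≠ 0 := by
      intro h
      apply hx
      funext i
      have h' : (x i : ℂ) = 0 := congrFun h i
      exact_mod_cast h'
    set y : Fin m → ℂ := P⁻¹ *ᵥ xc with hyd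
    have hPy : P *ᵥ y = xc := by
      rw [hyd, mulVec_mulVec, Matrix.mul_nonsing_inv _ hP, one_mulVec]
    have hy0 : y ≠ 0 := by
      intro h
      apply hxc
      rw [← hPy, h, mulVec_zero]
    have hsx : star xc = xc := by
      funext i
      simp [hxcd, Complex.conj_ofReal]
    have hs : xc ⬝ᵥ ((Q * P⁻¹) *ᵥ xc) = star y ⬝ᵥ ((Pᴴ * Q) *ᵥ y) := by
      calc xc ⬝ᵥ ((Q * P⁻¹) *ᵥ xc) = star (P *ᵥ y) ⬝ᵥ (Q *ᵥ y) := by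
            rw [hPy, hsx, ← mulVec_mulVec, ← hyd]
        _ = star y ⬝ᵥ ((Pᴴ * Q) *ᵥ y) := by
            rw [adj_dot, mulVec_mulVec]
    set s : ℂ := star y ⬝ᵥ ((Pᴴ * Q) *ᵥ y) with hsd
    set t : ℂ := star y ⬝ᵥ ((M.map Complex.ofReal) *ᵥ y) with htd
    have hdiff : s - star s = (2 * Complex.I) * t := by
      rw [hsd, conj_quad, conjTranspose_mul, conjTranspose_conjTranspose,
        ← dotProduct_sub, ← sub_mulVec]
      have hPQ : Pᴴ * Q - Qᴴ * P = N - Nᴴ := by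
        rw [← neg_sub (Qᴴ * P), key, neg_sub]
      rw [hPQ]
      have hNN' : N - Nᴴ = (2 * Complex.I) • (M.map Complex.ofReal) := by
        rw [← neg_sub, hNN]
        ext i j
        simp
      rw [hNN', smul_mulVec, dotProduct_smul, smul_eq_mul, htd]
    have h2I : (2 : ℂ) * Complex.I ≠ 0 := mul_ne_zero two_ne_zero Complex.I_ne_zero
    have him : (s.im : ℂ) = t := by
      have h2 : s - star s = ((2 * s.im : ℝ) : ℂ) * Complex.I := Complex.sub_conj s
      rw [h2] at hdiff
      apply mul_left_cancel₀ h2I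
      rw [← hdiff]
      push_cast
      ring
    have ht : s.im = t.re := by
      have := congrArg Complex.re him
      simpa using this
    rw [quadIm, ← hxcd, hs, ht]
    exact negQuad y hy0
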